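/- Let n', k be positive integers with gcd(k, n') = 1 and let g_1, the smallest positive integer b with k^b ≡ 1 (mod n'), have prime factorization g_1 = q_1^{γ_1} q_2^{γ_2} ⋯ q_m^{γ_m} with q_1 < q_2 < ... < q_m primes. For 1 ≤ j ≤ m let L_j = {q_{i_1} q_{i_2} ⋯ q_{i_j} : 1 ≤ i_1 < ... < i_j ≤ m} and G_j = Σ_{ℓ ∈ L_j} gcd(k^{g_1/ℓ} − 1, n'). Then (i) #{x ∈ Z_{n'} : g_x < g_1} = G_1 − G_2 + G_3 − G_4 + ⋯ (alternating sum over j = 1, ..., m), and (ii) G_1 − G_2 + G_3 − G_4 + ⋯ ≤ G_1. -/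

import Mathlib

open Finset

/-- The order `g_x` of `x ∈ Z_{n'}`: the smallest positive integer `b` such that
`x k^b ≡ x (mod n')`. -/
noncomputable def ordOf (n' k : ℕ) (x : ZMod n') : ℕ :=
  sInf {b : ℕ | 0 < b ∧ x * (k : ZMod n') ^ b = x}

section Aux

variable {n' k : ℕ}

/-- Number of solutions of `a * x = 0` in `ZMod n'` is `gcd a n'`. -/
lemma card_mulzero [NeZero n'] (a : ℕ) :
    #(Finset.univ.filter fun x : ZMod n' => (a : ZMod n') * x = 0) = Nat.gcd a n' := by
  have hn' : 0 < n' := Nat.pos_of_ne_zero (NeZero.ne n')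
  set g := Nat.gcd a n' with hgdef
  have hgpos : 0 < g := Nat.gcd_pos_of_pos_right a hn'
  have hgdvd : g ∣ n' := Nat.gcd_dvd_right a n'
  have hgadvd : g ∣ a := Nat.gcd_dvd_left a n'
  set c := n' / g with hcdef
  have hcg : g * c = n' := Nat.mul_div_cancel' hgdvd
  have hcpos : 0 < c := Nat.div_pos (Nat.le_of_dvd hn' hgdvd) hgpos
  have key : ∀ x : ZMod n', ((a : ZMod n') * x = 0 ↔ c ∣ x.val) := by
    intro x
    have hx : ((x.val : ℕ) : ZMod n') = x := ZMod.natCast_zmod_val x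
    have h1 : (a : ZMod n') * x = ((a * x.val : ℕ) : ZMod n') := by
      rw [Nat.cast_mul, hx]
    rw [h1, ZMod.natCast_eq_zero_iff]
    have ha : a = g * (a / g) := (Nat.mul_div_cancel' hgadvd).symm
    constructor
    · intro h
      have h2 : g * c ∣ g * ((a / g) * x.val) := by
        rw [hcg, ← mul_assoc, ← ha]; exact h
      have h3 : c ∣ (a / g) * x.val := (mul_dvd_mul_iff_left hgpos.ne').mp h2
      have hco : Nat.Coprime (a / g) c := Nat.coprime_div_gcd_div_gcd hgpos
      exact (Nat.Coprime.dvd_of_dvd_mul_left (hco.symm) h3)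
    · intro h
      obtain ⟨j, hj⟩ := h
      refine ⟨(a / g) * j, ?_⟩
      calc a * x.val = (g * (a / g)) * (c * j) := by rw [← ha, ← hj]
        _ = (g * c) * ((a / g) * j) := by ring
        _ = n' * ((a / g) * j) := by rw [hcg]
  have : #(Finset.range g) = #(Finset.univ.filter fun x : ZMod n' => (a : ZMod n') * x = 0) := by
    apply Finset.card_bij (fun j _ => ((c * j : ℕ) : ZMod n'))
    · intro j hj
      have hjg : j < g := Finset.mem_range.mp hj
      have hlt : c * j < n' := by
        calc c * j < c * g := (Nat.mul_lt_mul_left hcpos).mpr hjg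
          _ = n' := by rw [mul_comm, hcg]
      simp only [Finset.mem_filter, Finset.mem_univ, true_and]
      rw [key, ZMod.val_natCast_of_lt hlt]
      exact Dvd.intro j rfl
    · intro j₁ hj₁ j₂ hj₂ h
      have l1 : c * j₁ < n' := by
        calc c * j₁ < c * g := (Nat.mul_lt_mul_left hcpos).mpr (Finset.mem_range.mp hj₁)
          _ = n' := by rw [mul_comm, hcg]
      have l2 : c * j₂ < n' := by
        calc c * j₂ < c * g := (Nat.mul_lt_mul_left hcpos).mpr (Finset.mem_range.mp hj₂)
          _ = n' := by rw [mul_comm, hcg]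
      have := congrArg ZMod.val h
      rw [ZMod.val_natCast_of_lt l1, ZMod.val_natCast_of_lt l2] at this
      exact Nat.eq_of_mul_eq_mul_left hcpos this
    · intro x hx
      have hcd : c ∣ x.val := (key x).mp (Finset.mem_filter.mp hx).2
      obtain ⟨j, hj⟩ := hcd
      have hjg : j < g := by
        have : c * j < c * g := by rw [mul_comm c g, hcg, ← hj]; exact x.val_lt
        exact lt_of_mul_lt_mul_left this (Nat.zero_le c)
      exact ⟨j, Finset.mem_range.mpr hjg, by rw [← hj, ZMod.natCast_zmod_val]⟩
  rw [← this, Finset.card_range]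

lemma ordOf_spec (hn' : 0 < n') (hcop : Nat.Coprime k n') (x : ZMod n') :
    0 < ordOf n' k x ∧ x * (k : ZMod n') ^ (ordOf n' k x) = x := by
  haveI : NeZero n' := ⟨hn'.ne'⟩
  set u := ZMod.unitOfCoprime k hcop with hu
  have hcoe : ((u : (ZMod n')ˣ) : ZMod n') = (k : ZMod n') := ZMod.coe_unitOfCoprime k hcop
  have hek : (k : ZMod n') ^ (orderOf u) = 1 := by
    rw [← hcoe, ← Units.val_pow_eq_pow_val, pow_orderOf_eq_one, Units.val_one]
  have hne : orderOf u ∈ {b : ℕ | 0 < b ∧ x * (k : ZMod n') ^ b = x} :=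
    ⟨orderOf_pos u, by rw [hek, mul_one]⟩
  exact Nat.sInf_mem ⟨_, hne⟩

lemma ordOf_pow_helper (x : ZMod n') (g : ℕ) (hx : x * (k : ZMod n') ^ g = x) :
    ∀ s : ℕ, x * ((k : ZMod n') ^ g) ^ s = x := by
  intro s
  induction s with
  | zero => simp
  | succ s ih => rw [pow_succ, ← mul_assoc, ih, hx]

lemma ordOf_dvd_iff (hn' : 0 < n') (hcop : Nat.Coprime k n') (x : ZMod n') (d : ℕ) :
    x * (k : ZMod n') ^ d = x ↔ ordOf n' k x ∣ d := by
  obtain ⟨hpos, hfix⟩ := ordOf_spec hn' hcop x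
  set gx := ordOf n' k x with hgx
  constructor
  · intro h
    have hr : x * (k : ZMod n') ^ (d % gx) = x := by
      conv_lhs at h => rw [← Nat.div_add_mod d gx]
      rw [pow_add, pow_mul, ← mul_assoc, ordOf_pow_helper x gx hfix] at h
      exact h
    by_contra hnd
    have hrpos : 0 < d % gx := by
      rcases Nat.eq_zero_or_pos (d % gx) with h0 | h0
      · exact absurd (Nat.dvd_of_mod_eq_zero h0) hnd
      · exact h0
    have hle : gx ≤ d % gx := Nat.sInf_le ⟨hrpos, hr⟩
    exact absurd hle (not_le.mpr (Nat.mod_lt d hpos))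
  · rintro ⟨s, rfl⟩
    rw [pow_mul]
    exact ordOf_pow_helper x gx hfix s

end Aux

/-- Inclusion–exclusion count of the elements of order `< g_1`.
Here `g_1` has `m` distinct prime factors `q_1 < … < q_m`, `L_j` is identified with
the `j`-element subsets of the set of prime factors of `g_1` (via their products),
and `G j = Σ_{ℓ ∈ L_j} gcd(k^{g_1/ℓ} − 1, n')`. Then
`#{x : g_x < g_1} = G 1 − G 2 + G 3 − ⋯` and this alternating sum is `≤ G 1`. -/
theorem stmt8 (n' k : ℕ) (hn' : 0 < n') (hk : 0 < k) (hcop : Nat.Coprime k n')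
    (g₁ : ℕ) (hg₁ : g₁ = ordOf n' k 1)
    (m : ℕ) (hm : m = g₁.primeFactors.card)
    (G : ℕ → ℤ)
    (hG : ∀ j, G j = ∑ T ∈ Finset.powersetCard j g₁.primeFactors,
        ((Nat.gcd (k ^ (g₁ / T.prod id) - 1) n' : ℤ))) :
    (({x : ZMod n' | ordOf n' k x < g₁}.ncard : ℤ) =
        ∑ j ∈ Finset.Icc 1 m, (-1) ^ (j - 1) * G j) ∧
      (∑ j ∈ Finset.Icc 1 m, (-1 : ℤ) ^ (j - 1) * G j ≤ G 1) := by
  haveI : NeZero n' := ⟨hn'.ne'⟩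
  classical
  set pf := g₁.primeFactors with hpf
  set A : ℕ → Finset (ZMod n') :=
    (fun d => Finset.univ.filter fun x => x * (k : ZMod n') ^ d = x) with hA
  -- basic facts about g₁
  have hg₁pos : 0 < g₁ := by rw [hg₁]; exact (ordOf_spec hn' hcop 1).1
  have hkg₁ : (k : ZMod n') ^ g₁ = 1 := by
    have := (ordOf_spec hn' hcop (1 : ZMod n')).2
    rw [← hg₁] at this; simpa using this
  have ord_dvd_g₁ : ∀ x : ZMod n', ordOf n' k x ∣ g₁ := fun x =>
    (ordOf_dvd_iff hn' hcop x g₁).1 (by rw [hkg₁, mul_one])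
  -- cardinality of the fixed sets
  have cardA : ∀ d : ℕ, #(A d) = Nat.gcd (k ^ d - 1) n' := by
    intro d
    have h1 : (1 : ℕ) ≤ k ^ d := Nat.one_le_pow _ _ hk
    have : A d = Finset.univ.filter fun x : ZMod n' => ((k ^ d - 1 : ℕ) : ZMod n') * x = 0 := by
      apply Finset.filter_congr; intro x _
      have hc : ((k ^ d - 1 : ℕ) : ZMod n') = (k : ZMod n') ^ d - 1 := by
        push_cast [h1]; ring
      rw [hc, sub_mul, one_mul, sub_eq_zero, mul_comm]
    rw [this, card_mulzero]
  -- characterization of "order < g₁"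
  have crit : ∀ d : ℕ, d ∣ g₁ → (d < g₁ ↔ ∃ q ∈ pf, d ∣ g₁ / q) := by
    intro d hd
    constructor
    · intro hlt
      have hdpos : 0 < d := Nat.pos_of_dvd_of_pos hd hg₁pos
      set r := g₁ / d with hrdef
      have hr : d * r = g₁ := Nat.mul_div_cancel' hd
      have hr1 : r ≠ 1 := by
        intro h; rw [h, mul_one] at hr; omega
      set q := r.minFac with hq
      have hqp : q.Prime := Nat.minFac_prime hr1
      have hqr : q ∣ r := Nat.minFac_dvd r
      have hqg : q ∣ g₁ := hqr.trans ⟨d, by rw [← hr]; ring⟩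
      refine ⟨q, Nat.mem_primeFactors.mpr ⟨hqp, hqg, hg₁pos.ne'⟩, ?_⟩
      rw [Nat.dvd_div_iff_mul_dvd hqg]
      obtain ⟨s, hs⟩ := hqr
      exact ⟨s, by rw [← hr, hs]; ring⟩
    · rintro ⟨q, hqpf, hdvd⟩
      obtain ⟨hqp, hqg, -⟩ := Nat.mem_primeFactors.mp hqpf
      have hqq : 0 < g₁ / q := Nat.div_pos (Nat.le_of_dvd hg₁pos hqg) hqp.pos
      calc d ≤ g₁ / q := Nat.le_of_dvd hqq hdvd
        _ < g₁ := Nat.div_lt_self hg₁pos hqp.one_lt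
  -- the set of elements of order < g₁ is the union of the A (g₁/q)
  have union_eq : {x : ZMod n' | ordOf n' k x < g₁}
      = ↑(pf.biUnion fun q => A (g₁ / q)) := by
    ext x
    simp only [Set.mem_setOf_eq, Finset.coe_biUnion, Set.mem_iUnion, Finset.mem_coe,
      hA, Finset.mem_filter, Finset.mem_univ, true_and]
    rw [crit _ (ord_dvd_g₁ x)]
    constructor
    · rintro ⟨q, hq, hdvd⟩
      exact ⟨q, hq, (ordOf_dvd_iff hn' hcop x _).2 hdvd⟩
    · rintro ⟨q, hq, hfix⟩
      exact ⟨q, hq, (ordOf_dvd_iff hn' hcop x _).1 hfix⟩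
  -- intersections
  have inf_eq : ∀ (t : Finset ℕ) (ht : t.Nonempty), t ⊆ pf →
      t.inf' ht (fun q => A (g₁ / q)) = A (g₁ / t.prod id) := by
    intro t ht hts
    have hP : t.prod id ∣ g₁ :=
      (Finset.prod_dvd_prod_of_subset t pf id hts).trans
        (by simpa using Nat.prod_primeFactors_dvd g₁)
    ext x
    simp only [Finset.mem_inf', hA, Finset.mem_filter, Finset.mem_univ, true_and]
    have hdg : ordOf n' k x ∣ g₁ := ord_dvd_g₁ x
    set d := ordOf n' k x with hd
    constructor
    · intro h
      rw [ordOf_dvd_iff hn' hcop, Nat.dvd_div_iff_mul_dvd hP, mul_comm,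
        ← Nat.dvd_div_iff_mul_dvd hdg]
      apply Finset.prod_primes_dvd
      · intro p hp
        exact (Nat.prime_of_mem_primeFactors (hts hp)).prime
      · intro p hp
        have := (ordOf_dvd_iff hn' hcop x (g₁ / p)).1 (h p hp)
        have hpg : p ∣ g₁ := Nat.dvd_of_mem_primeFactors (hts hp)
        rw [Nat.dvd_div_iff_mul_dvd hpg, mul_comm, ← Nat.dvd_div_iff_mul_dvd hdg] at this
        simpa using this
    · intro h q hq
      rw [ordOf_dvd_iff hn' hcop] at h ⊢
      have hqP : (q : ℕ) ∣ t.prod id := Finset.dvd_prod_of_mem id hq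
      have hqg : q ∣ g₁ := Nat.dvd_of_mem_primeFactors (hts hq)
      rw [Nat.dvd_div_iff_mul_dvd hqg]
      rw [Nat.dvd_div_iff_mul_dvd hP] at h
      exact dvd_trans (mul_dvd_mul hqP dvd_rfl) h
  -- the nat card is the card of the biUnion
  have hncard : ({x : ZMod n' | ordOf n' k x < g₁}.ncard : ℤ)
      = (#(pf.biUnion fun q => A (g₁ / q)) : ℤ) := by
    rw [union_eq, Set.ncard_coe_finset]
  -- inclusion–exclusion
  have hIE := Finset.inclusion_exclusion_card_biUnion pf (fun q => A (g₁ / q))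
  set h : Finset ℕ → ℤ :=
    (fun t => (-1) ^ (#t + 1) * (Nat.gcd (k ^ (g₁ / t.prod id) - 1) n' : ℤ)) with hh
  have step1 : (#(pf.biUnion fun q => A (g₁ / q)) : ℤ)
      = ∑ t ∈ pf.powerset.filter (·.Nonempty), h t := by
    rw [hIE, ← Finset.sum_coe_sort (pf.powerset.filter (·.Nonempty)) h]
    apply Finset.sum_congr rfl
    intro t _
    have ht := Finset.mem_filter.mp t.2
    rw [inf_eq t.1 ht.2 (Finset.mem_powerset.mp ht.1), cardA]
  -- regroup by cardinality
  have hfilter : pf.powerset.filter (·.Nonempty) = pf.powerset.erase ∅ := by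
    ext t
    simp [Finset.nonempty_iff_ne_empty, and_comm]
  have hsum_pow : ∑ t ∈ pf.powerset, h t
      = ∑ j ∈ Finset.range (m + 1), ∑ t ∈ pf.powersetCard j, h t := by
    rw [hm, Finset.powerset_card_disjiUnion]
    exact Finset.sum_disjiUnion ..
  have hinner : ∀ j, ∑ t ∈ pf.powersetCard j, h t = (-1) ^ (j + 1) * G j := by
    intro j
    rw [hG j, Finset.mul_sum]
    apply Finset.sum_congr rfl
    intro t htm
    simp only [hh]
    have : #t = j := (Finset.mem_powersetCard.mp htm).2
    rw [this]
  have hG0 : h ∅ = (-1) ^ (0 + 1) * G 0 := by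
    rw [hG 0]
    simp [hh]
  have hrange : Finset.range (m + 1) = insert 0 (Finset.Icc 1 m) := by
    ext j
    simp only [Finset.mem_range, Finset.mem_insert, Finset.mem_Icc]
    omega
  have step2 : ∑ t ∈ pf.powerset.filter (·.Nonempty), h t
      = ∑ j ∈ Finset.Icc 1 m, (-1 : ℤ) ^ (j - 1) * G j := by
    rw [hfilter, Finset.sum_erase_eq_sub (Finset.empty_mem_powerset pf), hsum_pow, hrange,
      Finset.sum_insert (by simp), hinner 0, hG0]
    rw [add_sub_cancel_left]
    apply Finset.sum_congr rfl
    intro j hj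
    have hj1 : 1 ≤ j := (Finset.mem_Icc.mp hj).1
    rw [hinner j]
    congr 1
    have : j + 1 = (j - 1) + 2 := by omega
    rw [this, pow_add]
    simp
  have part1 : ({x : ZMod n' | ordOf n' k x < g₁}.ncard : ℤ)
      = ∑ j ∈ Finset.Icc 1 m, (-1 : ℤ) ^ (j - 1) * G j := by
    rw [hncard, step1, step2]
  refine ⟨part1, ?_⟩
  -- part (ii)
  rw [← part1, hncard]
  have hle : #(pf.biUnion fun q => A (g₁ / q)) ≤ ∑ q ∈ pf, #(A (g₁ / q)) :=
    Finset.card_biUnion_le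
  have hG1 : G 1 = ∑ q ∈ pf, (#(A (g₁ / q)) : ℤ) := by
    rw [hG 1, Finset.powersetCard_one, Finset.sum_map]
    apply Finset.sum_congr rfl
    intro q _
    rw [cardA]
    simp
  rw [hG1]
  exact_mod_cast hle
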